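/- Let k be an algebraically closed field of characteristic zero and let A ∈ z²k[[z]] have order n ≥ 2. Then there exists a formal power series β of order one such that A ∘ β = β ∘ zⁿ. -/

import Mathlib

open PowerSeries

section Aux

variable {k : Type*} [Field k]

lemma aux_pow_zero {P : PowerSeries k} (h0 : coeff 0 P = 0) :
    ∀ i p, p < i → coeff p (P ^ i) = 0 := by
  intro i
  induction i with
  | zero => intro p hp; omega
  | succ i ih =>
    intro p hp
    rw [pow_succ, coeff_mul]
    apply Finset.sum_eq_zero
    rintro ⟨a, b⟩ hab
    rw [Finset.HasAntidiagonal.mem_antidiagonal] at hab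
    rcases Nat.eq_zero_or_pos b with hb | hb
    · subst hb; rw [h0, mul_zero]
    · rw [ih a (by omega), zero_mul]

lemma aux_pow_diag {P : PowerSeries k} (h0 : coeff 0 P = 0) :
    ∀ i, coeff i (P ^ i) = (coeff 1 P) ^ i := by
  intro i
  induction i with
  | zero => simp
  | succ i ih =>
    rw [pow_succ, coeff_mul]
    rw [Finset.sum_eq_single (i, 1)]
    · rw [ih, pow_succ]
    · rintro ⟨a, b⟩ hab hne
      rw [Finset.HasAntidiagonal.mem_antidiagonal] at hab
      rcases Nat.eq_zero_or_pos b with hb | hb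
      · subst hb; rw [h0, mul_zero]
      · have : b = 1 ∨ 2 ≤ b := by omega
        rcases this with hb1 | hb2
        · exfalso; apply hne; subst hb1; simp at hab ⊢; omega
        · rw [aux_pow_zero h0 i a (by omega), zero_mul]
    · intro h
      exfalso; apply h; rw [Finset.HasAntidiagonal.mem_antidiagonal]

lemma aux_pow_congr {P Q : PowerSeries k} (h0P : coeff 0 P = 0) (h0Q : coeff 0 Q = 0)
    {s : ℕ} (h : ∀ t, t ≤ s → coeff t P = coeff t Q) :
    ∀ i m, m + 1 ≤ s + i → coeff m (P ^ i) = coeff m (Q ^ i) := by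
  intro i
  induction i with
  | zero => intro m hm; rfl
  | succ i ih =>
    intro m hm
    rw [pow_succ, pow_succ, coeff_mul, coeff_mul]
    apply Finset.sum_congr rfl
    rintro ⟨a, b⟩ hab
    rw [Finset.HasAntidiagonal.mem_antidiagonal] at hab
    by_cases hb : b ≤ s
    · by_cases ha : a + 1 ≤ s + i
      · rw [ih a ha, h b hb]
      · have hb0 : b = 0 := by omega
        subst hb0
        rw [h0P, h0Q, mul_zero, mul_zero]
    · have ha : a < i := by omega
      rw [aux_pow_zero h0P i a ha, aux_pow_zero h0Q i a ha, zero_mul, zero_mul]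

lemma aux_add_pow {Q : PowerSeries k} (h0Q : coeff 0 Q = 0) (e : k) {j n : ℕ}
    (hj : 2 ≤ j) (hn : 2 ≤ n) :
    coeff (j + n - 1) ((Q + e • X ^ j) ^ n)
      = coeff (j + n - 1) (Q ^ n) + (n : k) * (coeff 1 Q) ^ (n - 1) * e := by
  rw [add_pow, map_sum]
  rw [show n + 1 = (n - 1) + 1 + 1 by omega, Finset.sum_range_succ, Finset.sum_range_succ]
  rw [show n - 1 + 1 = n by omega]
  have hterm : ∀ i ∈ Finset.range (n - 1),
      coeff (j + n - 1) (Q ^ i * (e • X ^ j) ^ (n - i) * (n.choose i : PowerSeries k)) = 0 := by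
    intro i hi
    rw [Finset.mem_range] at hi
    obtain ⟨d, hd⟩ : ∃ d, n - i = d + 2 := ⟨n - i - 2, by omega⟩
    have hexp : (j : ℕ) * (d + 2) = j * d + 2 * j := by ring
    have hjd : 2 * d ≤ j * d := Nat.mul_le_mul_right d hj
    have hre : Q ^ i * (e • X ^ j) ^ (n - i) * (n.choose i : PowerSeries k)
        = (e ^ (d + 2) * (n.choose i : k)) • (Q ^ i * X ^ (j * (d + 2))) := by
      rw [hd, smul_pow, ← pow_mul, smul_eq_C_mul, smul_eq_C_mul,
        ← map_natCast (C (R := k)) (n.choose i), map_mul]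
      ring
    rw [hre, map_smul, coeff_mul_X_pow']
    split_ifs with hle
    · rw [aux_pow_zero h0Q i (j + n - 1 - j * (d + 2)) (by omega), smul_zero]
    · rw [smul_zero]
  rw [Finset.sum_eq_zero hterm, zero_add]
  have h1 : coeff (j + n - 1) (Q ^ (n - 1) * (e • X ^ j) ^ (n - (n - 1))
        * (n.choose (n - 1) : PowerSeries k))
      = (n : k) * (coeff 1 Q) ^ (n - 1) * e := by
    have hre : Q ^ (n - 1) * (e • X ^ j) ^ (n - (n - 1)) * (n.choose (n - 1) : PowerSeries k)
        = (e * (n : k)) • (Q ^ (n - 1) * X ^ j) := by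
      have hch : n.choose (n - 1) = n := by
        rw [Nat.choose_symm (by omega : 1 ≤ n), Nat.choose_one_right]
      rw [show n - (n - 1) = 1 by omega, pow_one, hch,
        smul_eq_C_mul, smul_eq_C_mul, ← map_natCast (C (R := k)) n, map_mul]
      ring
    rw [hre, map_smul, coeff_mul_X_pow']
    rw [if_pos (by omega), show j + n - 1 - j = n - 1 by omega, aux_pow_diag h0Q]
    simp [smul_eq_mul]; ring
  rw [h1]
  have h2 : coeff (j + n - 1) (Q ^ n * (e • X ^ j) ^ (n - n) * (n.choose n : PowerSeries k))
      = coeff (j + n - 1) (Q ^ n) := by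
    simp
  rw [h2]
  ring

/-- The next Böttcher coefficient. -/
noncomputable def nextc (A : PowerSeries k) (n : ℕ) (P : PowerSeries k) (j : ℕ) : k :=
  ((if n ∣ (j + n - 1) then coeff ((j + n - 1) / n) P else 0) -
    ∑ i ∈ Finset.range (j + n), coeff i A * coeff (j + n - 1) (P ^ i)) / (n : k)

/-- Truncated Böttcher series: `bott A n c j` has the first `j` coefficients. -/
noncomputable def bott (A : PowerSeries k) (n : ℕ) (c : k) : ℕ → PowerSeries k
  | 0 => 0
  | 1 => 0
  | 2 => c • X
  | (j + 3) => bott A n c (j + 2) + nextc A n (bott A n c (j + 2)) (j + 2) • X ^ (j + 2)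

variable (A : PowerSeries k) (n : ℕ) (c : k)

lemma bott_succ {j : ℕ} (hj : 2 ≤ j) :
    bott A n c (j + 1) = bott A n c j + nextc A n (bott A n c j) j • X ^ j := by
  obtain ⟨j', rfl⟩ : ∃ j', j = j' + 2 := ⟨j - 2, by omega⟩
  rfl

lemma coeff_bott_stable : ∀ {t j j'}, t < j → j ≤ j' →
    coeff t (bott A n c j') = coeff t (bott A n c j) := by
  intro t j j' htj hjj
  induction j' with
  | zero => omega
  | succ j' ih =>
    rcases Nat.lt_or_ge j (j' + 1) with hlt | hge
    · rcases Nat.lt_or_ge j' 2 with h2 | h2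
      · have hj' : j' = 1 := by omega
        subst hj'
        have hj : j = 1 := by omega
        subst hj
        have ht : t = 0 := by omega
        subst ht
        show coeff 0 (c • X) = coeff 0 (0 : PowerSeries k)
        simp
      · rw [bott_succ A n c h2, map_add, map_smul, coeff_X_pow,
          if_neg (by omega : ¬ t = j'), smul_zero, add_zero]
        exact ih (by omega)
    · have : j = j' + 1 := by omega
      subst this; rfl

end Aux

/-- Composition `A ∘ B` of formal power series, well defined (and agreeing with the usual
substitution) when `ord B ≥ 1`. -/
noncomputable def psComp {k : Type*} [Field k] (A B : PowerSeries k) : PowerSeries k :=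
  PowerSeries.mk fun n =>
    ∑ i ∈ Finset.range (n + 1), (PowerSeries.coeff i A) * PowerSeries.coeff n (B ^ i)

/-- Existence of a Böttcher function: if `k` is an algebraically closed field of characteristic
zero and `A ∈ z²k[[z]]` has order `n ≥ 2`, then there is a formal power series `β` of order one
with `A ∘ β = β ∘ zⁿ`. -/
theorem exists_boettcher {k : Type*} [Field k] [IsAlgClosed k] [CharZero k]
    (A : PowerSeries k) (n : ℕ) (hn : 2 ≤ n) (hA : A.order = n) :
    ∃ β : PowerSeries k, β.order = 1 ∧ psComp A β = psComp β (PowerSeries.X ^ n) := by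
  obtain ⟨han, hlow⟩ := PowerSeries.order_eq_nat.mp hA
  obtain ⟨c, hc⟩ := IsAlgClosed.exists_pow_nat_eq ((coeff n A)⁻¹) (n := n - 1) (by omega)
  have hc0 : c ≠ 0 := by
    intro h
    rw [h, zero_pow (by omega : n - 1 ≠ 0)] at hc
    exact han (inv_eq_zero.mp hc.symm)
  have hkey : coeff n A * c ^ (n - 1) = 1 := by
    rw [hc, mul_inv_cancel₀ han]
  have hn0 : (n : k) ≠ 0 := Nat.cast_ne_zero.mpr (by omega)
  set β : PowerSeries k := PowerSeries.mk (fun t => coeff t (bott A n c (t + 1))) with hβ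
  have hcoeffβ : ∀ {t j : ℕ}, t < j → coeff t β = coeff t (bott A n c j) := by
    intro t j h
    rw [hβ, coeff_mk]
    exact (coeff_bott_stable A n c (Nat.lt_succ_self t) h).symm
  have h0β : coeff 0 β = 0 := by
    rw [hcoeffβ (by omega : (0:ℕ) < 1)]; simp [bott]
  have h1β : coeff 1 β = c := by
    rw [hcoeffβ (by omega : (1:ℕ) < 2)]
    show coeff 1 (c • X) = c
    simp
  have main : ∀ m, (∑ i ∈ Finset.range (m + 1), coeff i A * coeff m (β ^ i))
      = if n ∣ m then coeff (m / n) β else 0 := by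
    intro m
    rcases lt_trichotomy m n with hm | hm | hm
    · -- m < n
      rw [Finset.sum_eq_zero (fun i hi => by
        rw [Finset.mem_range] at hi
        rw [hlow i (by omega), zero_mul])]
      split_ifs with hd
      · have hm0 : m = 0 := Nat.eq_zero_of_dvd_of_lt hd hm
        subst hm0
        rw [Nat.zero_div, h0β]
      · rfl
    · -- m = n
      subst hm
      rw [Finset.sum_eq_single m]
      · rw [aux_pow_diag h0β, h1β, show c ^ m = c ^ (m - 1) * c by
          rw [← pow_succ]; congr 1; omega, ← mul_assoc, hkey, one_mul,
          if_pos dvd_rfl, Nat.div_self (by omega : 0 < m), h1β]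
      · intro i hi hne
        rw [Finset.mem_range] at hi
        rw [hlow i (by omega), zero_mul]
      · intro h
        exact absurd (Finset.mem_range.mpr (by omega)) h
    · -- m > n
      obtain ⟨j, hj2, rfl⟩ : ∃ j, 2 ≤ j ∧ m = j + n - 1 := ⟨m - n + 1, by omega, by omega⟩
      set P := bott A n c j with hP
      have h0P : coeff 0 P = 0 := by
        rw [hP, coeff_bott_stable A n c (by omega : (0:ℕ) < 1) (by omega : 1 ≤ j)]
        simp [bott]
      have h1P : coeff 1 P = c := by
        rw [hP, coeff_bott_stable A n c (by omega : (1:ℕ) < 2) hj2]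
        show coeff 1 (c • X) = c
        simp
      set e := nextc A n P j with he
      set P' := bott A n c (j + 1) with hP'
      have hP'eq : P' = P + e • X ^ j := bott_succ A n c hj2
      have hPP' : ∀ t, t ≤ j - 1 → coeff t P' = coeff t P := by
        intro t ht
        rw [hP'eq, map_add, map_smul, coeff_X_pow, if_neg (by omega : ¬ t = j),
          smul_zero, add_zero]
      have h0P' : coeff 0 P' = 0 := by rw [hPP' 0 (by omega)]; exact h0P
      have hβP' : ∀ t, t ≤ j → coeff t β = coeff t P' := fun t ht => hcoeffβ (by omega)
      have hβP : ∀ t, t ≤ j - 1 → coeff t β = coeff t P := fun t ht => hcoeffβ (by omega)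
      have hmlt : j + n - 1 < j * n := by
        obtain ⟨j', rfl⟩ : ∃ j', j = j' + 2 := ⟨j - 2, by omega⟩
        obtain ⟨n', rfl⟩ : ∃ n', n = n' + 2 := ⟨n - 2, by omega⟩
        have : (j' + 2) * (n' + 2) = j' * n' + 2 * j' + 2 * n' + 4 := by ring
        omega
      have step1 : (∑ i ∈ Finset.range (j + n - 1 + 1), coeff i A * coeff (j + n - 1) (β ^ i))
          = ∑ i ∈ Finset.range (j + n - 1 + 1), coeff i A * coeff (j + n - 1) (P' ^ i) := by
        apply Finset.sum_congr rfl
        intro i hi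
        by_cases hin : n ≤ i
        · rw [aux_pow_congr h0β h0P' hβP' i (j + n - 1) (by omega)]
        · rw [hlow i (by omega), zero_mul, zero_mul]
      have step2 : (∑ i ∈ Finset.range (j + n - 1 + 1), coeff i A * coeff (j + n - 1) (P' ^ i))
          = (∑ i ∈ Finset.range (j + n - 1 + 1), coeff i A * coeff (j + n - 1) (P ^ i))
            + coeff n A * ((n : k) * c ^ (n - 1) * e) := by
        have hterm : ∀ i ∈ Finset.range (j + n - 1 + 1),
            coeff i A * coeff (j + n - 1) (P' ^ i)
              = coeff i A * coeff (j + n - 1) (P ^ i)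
                + (if i = n then coeff n A * ((n : k) * c ^ (n - 1) * e) else 0) := by
          intro i hi
          by_cases hin : i = n
          · subst hin
            rw [if_pos rfl, hP'eq, aux_add_pow h0P e hj2 hn, h1P]
            ring
          · rw [if_neg hin]
            rcases Nat.lt_or_ge i n with hlt | hge
            · rw [hlow i hlt, zero_mul, zero_mul, add_zero]
            · rw [aux_pow_congr h0P' h0P hPP' i (j + n - 1) (by omega), add_zero]
        rw [Finset.sum_congr rfl hterm, Finset.sum_add_distrib,
          Finset.sum_ite_eq' (Finset.range (j + n - 1 + 1)) n
            (fun _ => coeff n A * ((n : k) * c ^ (n - 1) * e)),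
          if_pos (Finset.mem_range.mpr (by omega))]
      rw [step1, step2]
      have hextra : coeff n A * ((n : k) * c ^ (n - 1) * e) = (n : k) * e := by
        rw [show coeff n A * ((n : k) * c ^ (n - 1) * e)
            = (coeff n A * c ^ (n - 1)) * ((n : k) * e) by ring, hkey, one_mul]
      rw [hextra, he, nextc, mul_div_cancel₀ _ hn0]
      rw [show j + n - 1 + 1 = j + n by omega]
      have hdvd : (m : ℕ) → True := fun _ => trivial
      have hdivlt : (j + n - 1) / n < j := (Nat.div_lt_iff_lt_mul (by omega : 0 < n)).mpr
        (by omega)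
      rw [add_sub_cancel]
      split_ifs with hd
      · exact (hβP _ (by omega)).symm
      · rfl
  refine ⟨β, ?_, ?_⟩
  · have : β.order = ((1 : ℕ) : ℕ∞) := PowerSeries.order_eq_nat.mpr
      ⟨by rw [h1β]; exact hc0, fun i hi => by
        have : i = 0 := by omega
        subst this; exact h0β⟩
    exact_mod_cast this
  · ext m
    rw [psComp, psComp, coeff_mk, coeff_mk, main m]
    have hXp : ∀ i, coeff m ((X ^ n : PowerSeries k) ^ i) = if m = n * i then 1 else 0 := by
      intro i
      rw [← pow_mul, coeff_X_pow]
    have hr : (∑ i ∈ Finset.range (m + 1), coeff i β * coeff m ((X ^ n : PowerSeries k) ^ i))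
        = if n ∣ m then coeff (m / n) β else 0 := by
      by_cases hd : n ∣ m
      · obtain ⟨q, rfl⟩ := hd
        rw [if_pos (Dvd.intro q rfl), Nat.mul_div_cancel_left q (by omega : 0 < n)]
        rw [Finset.sum_eq_single q]
        · rw [hXp, if_pos rfl, mul_one]
        · intro i hi hne
          rw [hXp, if_neg (fun h => hne (Nat.eq_of_mul_eq_mul_left (by omega) h.symm)), mul_zero]
        · intro h
          exact absurd (Finset.mem_range.mpr (by
            have : q ≤ n * q := Nat.le_mul_of_pos_left q (by omega)
            omega)) h
      · rw [if_neg hd]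
        apply Finset.sum_eq_zero
        intro i hi
        rw [hXp, if_neg (fun h => hd ⟨i, h⟩), mul_zero]
    rw [hr]
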